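/- arXiv:2104.06078 — 3 statements merged into one kernel-verified Lean document; each statement's English description precedes it below -/
import Mathlib

section
/- The function J₁(v,p,e) = ((cp − ve)(c − v))/((cp + ve)(c + v)) is an invariant of the infinitesimal generator X of the one-parameter reciprocal transformations: applying X to J₁ gives zero, i.e., −pv·∂J₁/∂v − p²·∂J₁/∂p + (c²p² − e²v²)Γ²·∂J₁/∂e = 0, where Γ² = 1/(c² − v²). -/
/-- The invariant J₁ of the 1+1-dimensional reciprocal transformation. -/
noncomputable def J1 (c v p e : ℝ) : ℝ :=
  ((c * p - v * e) * (c - v)) / ((c * p + v * e) * (c + v))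

theorem J1_invariant (c v p e : ℝ) (hc : 0 < c) (hv : |v| < c)
    (hden : (c * p + v * e) * (c + v) ≠ 0) :
    -(p * v) * deriv (fun v' => J1 c v' p e) v
      - p ^ 2 * deriv (fun p' => J1 c v p' e) p
      + (c ^ 2 * p ^ 2 - e ^ 2 * v ^ 2) * (1 / (c ^ 2 - v ^ 2)) *
        deriv (fun e' => J1 c v p e') e = 0 := by
  have hcv : c ^ 2 - v ^ 2 ≠ 0 := by
    have h2 : v ^ 2 < c ^ 2 := by
      have := abs_lt.mp hv
      nlinarith [this.1, this.2]
    nlinarith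
  set D := (c * p + v * e) * (c + v) with hD
  -- deriv in v
  have hNv : HasDerivAt (fun v' => (c * p - v' * e) * (c - v'))
      ((-e) * (c - v) + (c * p - v * e) * (-1)) v := by
    have hA : HasDerivAt (fun v' => c * p - v' * e) (-e) v := by
      simpa using (hasDerivAt_const v (c * p)).fun_sub ((hasDerivAt_id v).mul_const e)
    have hB : HasDerivAt (fun v' => c - v') (-1) v := by
      simpa using (hasDerivAt_const v c).fun_sub (hasDerivAt_id v)
    exact hA.mul hB
  have hDv : HasDerivAt (fun v' => (c * p + v' * e) * (c + v'))
      (e * (c + v) + (c * p + v * e) * 1) v := by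
    have hA : HasDerivAt (fun v' => c * p + v' * e) e v := by
      simpa using (hasDerivAt_const v (c * p)).fun_add ((hasDerivAt_id v).mul_const e)
    have hB : HasDerivAt (fun v' => c + v') 1 v := by
      simpa using (hasDerivAt_const v c).fun_add (hasDerivAt_id v)
    exact hA.mul hB
  have hdv : deriv (fun v' => J1 c v' p e) v =
      (((-e) * (c - v) + (c * p - v * e) * (-1)) * D
        - (c * p - v * e) * (c - v) * (e * (c + v) + (c * p + v * e) * 1)) / D ^ 2 := by
    simpa [J1, hD] using (hNv.fun_div hDv hden).deriv
  -- deriv in p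
  have hNp : HasDerivAt (fun p' => (c * p' - v * e) * (c - v)) (c * (c - v)) p := by
    have hA : HasDerivAt (fun p' => c * p' - v * e) c p := by
      simpa using ((hasDerivAt_id p).const_mul c).fun_sub (hasDerivAt_const p (v * e))
    simpa using hA.mul_const (c - v)
  have hDp : HasDerivAt (fun p' => (c * p' + v * e) * (c + v)) (c * (c + v)) p := by
    have hA : HasDerivAt (fun p' => c * p' + v * e) c p := by
      simpa using ((hasDerivAt_id p).const_mul c).fun_add (hasDerivAt_const p (v * e))
    simpa using hA.mul_const (c + v)
  have hdp : deriv (fun p' => J1 c v p' e) p =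
      (c * (c - v) * D - (c * p - v * e) * (c - v) * (c * (c + v))) / D ^ 2 := by
    simpa [J1, hD] using (hNp.fun_div hDp hden).deriv
  -- deriv in e
  have hNe : HasDerivAt (fun e' => (c * p - v * e') * (c - v)) ((-v) * (c - v)) e := by
    have hA : HasDerivAt (fun e' => c * p - v * e') (-v) e := by
      simpa using (hasDerivAt_const e (c * p)).fun_sub ((hasDerivAt_id e).const_mul v)
    simpa using hA.mul_const (c - v)
  have hDe : HasDerivAt (fun e' => (c * p + v * e') * (c + v)) (v * (c + v)) e := by
    have hA : HasDerivAt (fun e' => c * p + v * e') v e := by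
      simpa using (hasDerivAt_const e (c * p)).fun_add ((hasDerivAt_id e).const_mul v)
    simpa using hA.mul_const (c + v)
  have hde : deriv (fun e' => J1 c v p e') e =
      ((-v) * (c - v) * D - (c * p - v * e) * (c - v) * (v * (c + v))) / D ^ 2 := by
    simpa [J1, hD] using (hNe.fun_div hDe hden).deriv
  rw [hdv, hdp, hde, hD]
  field_simp
  ring
end

section
/- The function J₂(ρ,v,p,e) = (ρp/(cp + ev))·√((c−v)/(c+v)) satisfies XJ₂ = 0, where X = −ρv²eΓ²∂ρ − pv∂v − p²∂p + (c²p² − e²v²)Γ²∂e and Γ² = 1/(c²−v²). -/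
/-- The invariant J₂ of the 1+1-dimensional reciprocal transformation. -/
noncomputable def J2 (c ρ v p e : ℝ) : ℝ :=
  (ρ * p / (c * p + e * v)) * Real.sqrt ((c - v) / (c + v))

theorem J2_invariant (c ρ v p e : ℝ) (hc : 0 < c) (hv : |v| < c)
    (hden : c * p + e * v ≠ 0) :
    -(ρ * v ^ 2 * e) * (1 / (c ^ 2 - v ^ 2)) * deriv (fun ρ' => J2 c ρ' v p e) ρ
      - p * v * deriv (fun v' => J2 c ρ v' p e) v
      - p ^ 2 * deriv (fun p' => J2 c ρ v p' e) p
      + (c ^ 2 * p ^ 2 - e ^ 2 * v ^ 2) * (1 / (c ^ 2 - v ^ 2)) *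
        deriv (fun e' => J2 c ρ v p e') e = 0 := by
  obtain ⟨hv1, hv2⟩ := abs_lt.mp hv
  have hcp : (0:ℝ) < c + v := by linarith
  have hcm : (0:ℝ) < c - v := by linarith
  have hq : (0:ℝ) < (c - v) / (c + v) := div_pos hcm hcp
  have hSpos : 0 < Real.sqrt ((c - v) / (c + v)) := Real.sqrt_pos.mpr hq
  have hS2 : Real.sqrt ((c - v) / (c + v)) * Real.sqrt ((c - v) / (c + v))
      = (c - v) / (c + v) := Real.mul_self_sqrt hq.le
  have hS2' : Real.sqrt ((c - v) / (c + v)) * Real.sqrt ((c - v) / (c + v)) * (c + v)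
      = c - v := by rw [hS2]; field_simp
  -- derivative in ρ
  have dρ : deriv (fun ρ' => J2 c ρ' v p e) ρ
      = p / (c * p + e * v) * Real.sqrt ((c - v) / (c + v)) := by
    have h : (fun ρ' => J2 c ρ' v p e)
        = fun ρ' => ρ' * (p / (c * p + e * v) * Real.sqrt ((c - v) / (c + v))) := by
      funext x; simp only [J2]; ring
    rw [h]; simp
  -- derivative in p
  have dp : deriv (fun p' => J2 c ρ v p' e) p
      = ρ * e * v / (c * p + e * v) ^ 2 * Real.sqrt ((c - v) / (c + v)) := by
    have h0 := (((hasDerivAt_id p).const_mul ρ).div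
      (((hasDerivAt_id p).const_mul c).add_const (e * v)) hden).mul_const
      (Real.sqrt ((c - v) / (c + v)))
    simp only [id_eq, mul_one] at h0
    rw [show ρ * (c * p + e * v) - ρ * p * c = ρ * e * v by ring] at h0
    simpa only [J2, Pi.div_apply] using h0.deriv
  -- derivative in e
  have de : deriv (fun e' => J2 c ρ v p e') e
      = -(ρ * p * v) / (c * p + e * v) ^ 2 * Real.sqrt ((c - v) / (c + v)) := by
    have h0 := ((hasDerivAt_const e (ρ * p)).div
      (((hasDerivAt_id e).mul_const v).const_add (c * p)) hden).mul_const
      (Real.sqrt ((c - v) / (c + v)))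
    simp only [id_eq, one_mul, zero_mul, zero_sub] at h0
    simpa only [J2, Pi.div_apply] using h0.deriv
  -- derivative in v
  have dv : deriv (fun v' => J2 c ρ v' p e) v
      = -(ρ * p * e) / (c * p + e * v) ^ 2 * Real.sqrt ((c - v) / (c + v))
        + ρ * p / (c * p + e * v) *
          (-c * Real.sqrt ((c - v) / (c + v)) / ((c + v) * (c - v))) := by
    have hq1 : HasDerivAt (fun v' => (c - v') / (c + v'))
        (((0 - 1) * (c + v) - (c - v) * (0 + 1)) / (c + v) ^ 2) v :=
      ((hasDerivAt_const v c).sub (hasDerivAt_id v)).div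
        ((hasDerivAt_const v c).add (hasDerivAt_id v)) hcp.ne'
    have hs := hq1.sqrt hq.ne'
    have hg := (hasDerivAt_const v (ρ * p)).div
      (((hasDerivAt_id v).const_mul e).const_add (c * p)) hden
    have h0 := hg.mul hs
    simp only [id_eq, one_mul, mul_one, zero_mul, zero_sub, zero_add, neg_one_mul, Pi.div_def, Pi.mul_def] at h0
    simp only [J2]
    rw [h0.deriv]
    have key : (-(c + v) - (c - v)) / (c + v) ^ 2 / (2 * Real.sqrt ((c - v) / (c + v)))
        = -c * Real.sqrt ((c - v) / (c + v)) / ((c + v) * (c - v)) := by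
      rw [show -(c + v) - (c - v) = -(2 * c) by ring, div_div,
        div_eq_div_iff (by positivity) (by positivity)]
      linear_combination (2 * c * (c + v)) * hS2'
    rw [key]
  rw [dρ, dp, de, dv]
  have hc2v2 : c ^ 2 - v ^ 2 ≠ 0 := by nlinarith
  have hcp' : c + v ≠ 0 := hcp.ne'
  have hcm' : c - v ≠ 0 := hcm.ne'
  generalize Real.sqrt ((c - v) / (c + v)) = S
  field_simp
  ring
end

section
/- The function J₃(u,v,p,e) = ((cp − eq)(c − q))/((cp + eq)(c + q)), where q = √(u²+v²), is annihilated by the vector field X = −ρeq²Γ²∂ρ − pu∂u − pv∂v − p²∂p + (c²p² − e²q²)Γ²∂e, with Γ² = 1/(c²−q²). -/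
set_option maxHeartbeats 1600000


/-- The invariant J₃ of the two-dimensional reciprocal transformation. -/
noncomputable def J3 (c u v p e : ℝ) : ℝ :=
  ((c * p - e * Real.sqrt (u ^ 2 + v ^ 2)) * (c - Real.sqrt (u ^ 2 + v ^ 2))) /
    ((c * p + e * Real.sqrt (u ^ 2 + v ^ 2)) * (c + Real.sqrt (u ^ 2 + v ^ 2)))

private lemma F_hasDeriv {φ : ℝ → ℝ} {x d : ℝ} (c p e : ℝ)
    (hφ : HasDerivAt φ d x)
    (hD : (c * p + e * φ x) * (c + φ x) ≠ 0) :
    HasDerivAt (fun t => ((c * p - e * φ t) * (c - φ t)) / ((c * p + e * φ t) * (c + φ t)))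
      ((((0 - e * d) * (c - φ x) + (c * p - e * φ x) * (0 - d)) *
          ((c * p + e * φ x) * (c + φ x)) -
        ((c * p - e * φ x) * (c - φ x)) *
          ((0 + e * d) * (c + φ x) + (c * p + e * φ x) * (0 + d))) /
        ((c * p + e * φ x) * (c + φ x)) ^ 2) x := by
  have h1 : HasDerivAt (fun t => c * p - e * φ t) (0 - e * d) x :=
    (hasDerivAt_const x (c * p)).sub (hφ.const_mul e)
  have h2 : HasDerivAt (fun t => c - φ t) (0 - d) x := (hasDerivAt_const x c).sub hφ
  have h3 : HasDerivAt (fun t => c * p + e * φ t) (0 + e * d) x :=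
    (hasDerivAt_const x (c * p)).add (hφ.const_mul e)
  have h4 : HasDerivAt (fun t => c + φ t) (0 + d) x := (hasDerivAt_const x c).add hφ
  exact (h1.mul h2).div (h3.mul h4) hD

theorem J3_invariant (c ρ u v p e : ℝ) (hc : 0 < c)
    (hq : Real.sqrt (u ^ 2 + v ^ 2) < c)
    (hden : (c * p + e * Real.sqrt (u ^ 2 + v ^ 2)) * (c + Real.sqrt (u ^ 2 + v ^ 2)) ≠ 0) :
    -(ρ * e * (u ^ 2 + v ^ 2)) * (1 / (c ^ 2 - (u ^ 2 + v ^ 2))) *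
        deriv (fun ρ' : ℝ => J3 c u v p e) ρ
      - p * u * deriv (fun u' => J3 c u' v p e) u
      - p * v * deriv (fun v' => J3 c u v' p e) v
      - p ^ 2 * deriv (fun p' => J3 c u v p' e) p
      + (c ^ 2 * p ^ 2 - e ^ 2 * (u ^ 2 + v ^ 2)) * (1 / (c ^ 2 - (u ^ 2 + v ^ 2))) *
        deriv (fun e' => J3 c u v p e') e = 0 := by
  set q := Real.sqrt (u ^ 2 + v ^ 2) with hqdef
  have hs0 : (0:ℝ) ≤ u ^ 2 + v ^ 2 := by positivity
  have hq0 : 0 ≤ q := Real.sqrt_nonneg _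
  have hq2 : q ^ 2 = u ^ 2 + v ^ 2 := Real.sq_sqrt hs0
  have hρ : deriv (fun ρ' : ℝ => J3 c u v p e) ρ = 0 := deriv_const _ _
  -- derivative in p
  have hp : HasDerivAt (fun p' => J3 c u v p' e)
      (((c * 1) * (c - q) * ((c * p + e * q) * (c + q)) -
          ((c * p - e * q) * (c - q)) * ((c * 1) * (c + q))) /
        ((c * p + e * q) * (c + q)) ^ 2) p := by
    have h1 : HasDerivAt (fun p' => (c * p' - e * q) * (c - q)) ((c * 1) * (c - q)) p :=
      (((hasDerivAt_id p).const_mul c).sub_const (e * q)).mul_const (c - q)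
    have h3 : HasDerivAt (fun p' => (c * p' + e * q) * (c + q)) ((c * 1) * (c + q)) p :=
      (((hasDerivAt_id p).const_mul c).add_const (e * q)).mul_const (c + q)
    exact h1.div h3 hden
  -- derivative in e
  have he : HasDerivAt (fun e' => J3 c u v p e')
      (((0 - 1 * q) * (c - q) * ((c * p + e * q) * (c + q)) -
          ((c * p - e * q) * (c - q)) * ((0 + 1 * q) * (c + q))) /
        ((c * p + e * q) * (c + q)) ^ 2) e := by
    have h1 : HasDerivAt (fun e' : ℝ => (c * p - e' * q) * (c - q)) ((0 - 1 * q) * (c - q)) e :=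
      ((hasDerivAt_const e (c * p)).sub ((hasDerivAt_id e).mul_const q)).mul_const (c - q)
    have h3 : HasDerivAt (fun e' : ℝ => (c * p + e' * q) * (c + q)) ((0 + 1 * q) * (c + q)) e :=
      ((hasDerivAt_const e (c * p)).add ((hasDerivAt_id e).mul_const q)).mul_const (c + q)
    exact h1.div h3 hden
  have hc2 : c ^ 2 - (u ^ 2 + v ^ 2) ≠ 0 := by
    have : q ^ 2 < c ^ 2 := by nlinarith
    rw [← hq2]; nlinarith
  rcases eq_or_lt_of_le hs0 with hs | hs
  · -- u = v = 0 case
    have hu0 : u = 0 := by nlinarith [sq_nonneg u, sq_nonneg v]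
    have hv0 : v = 0 := by nlinarith [sq_nonneg u, sq_nonneg v]
    have hqz : q = 0 := by rw [hqdef, hu0, hv0]; simp
    rw [hρ, hp.deriv, he.deriv, hu0, hv0, hqz]
    ring
  · -- q > 0 case
    have hsne : u ^ 2 + v ^ 2 ≠ 0 := ne_of_gt hs
    have hqpos : 0 < q := Real.sqrt_pos.mpr hs
    have hqne : q ≠ 0 := ne_of_gt hqpos
    have hφu : HasDerivAt (fun u' => Real.sqrt (u' ^ 2 + v ^ 2)) (u / q) u := by
      have h1 : HasDerivAt (fun u' => u' ^ 2 + v ^ 2) (2 * u) u := by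
        simpa using (hasDerivAt_pow 2 u).add_const (v ^ 2)
      have h2 := (Real.hasDerivAt_sqrt hsne).comp u h1
      refine h2.congr_deriv ?_
      rw [← hqdef]; field_simp
    have hφv : HasDerivAt (fun v' => Real.sqrt (u ^ 2 + v' ^ 2)) (v / q) v := by
      have h1 : HasDerivAt (fun v' => u ^ 2 + v' ^ 2) (2 * v) v := by
        simpa using (hasDerivAt_pow 2 v).const_add (u ^ 2)
      have h2 := (Real.hasDerivAt_sqrt hsne).comp v h1
      refine h2.congr_deriv ?_
      rw [← hqdef]; field_simp
    have hu := F_hasDeriv c p e hφu (by rw [← hqdef]; exact hden)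
    have hv := F_hasDeriv c p e hφv (by rw [← hqdef]; exact hden)
    rw [← hqdef] at hu hv
    have hD2 : ((c * p + e * q) * (c + q)) ≠ 0 := hden
    have hcq : c ^ 2 - q ^ 2 ≠ 0 := by rw [hq2]; exact hc2
    set K : ℝ := (((0 - e) * (c - q) + (c * p - e * q) * (0 - 1)) * ((c * p + e * q) * (c + q)) -
        (c * p - e * q) * (c - q) * ((0 + e) * (c + q) + (c * p + e * q))) /
        (q * ((c * p + e * q) * (c + q)) ^ 2) with hK
    have hugoal : deriv (fun u' => J3 c u' v p e) u = u * K := by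
      unfold J3; rw [hu.deriv, hK]; field_simp; ring
    have hvgoal : deriv (fun v' => J3 c u v' p e) v = v * K := by
      unfold J3; rw [hv.deriv, hK]; field_simp; ring
    have hsub : u ^ 2 = q ^ 2 - v ^ 2 := by rw [hq2]; ring
    rw [hρ, hp.deriv, he.deriv, hugoal, hvgoal, ← hq2]
    have : p * u * (u * K) = p * (q ^ 2 - v ^ 2) * K := by rw [← hsub]; ring
    rw [this]
    have : p * v * (v * K) = p * v ^ 2 * K := by ring
    rw [this, hK]
    field_simp [hqne, hD2, hcq]
    ring
end
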